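/- Planar graphs have unbounded and-pointer number. Specifically, for every l ∈ ℕ there exists a planar graph (namely the graph G_k for k = l²+1 consisting of two stars with centers x and y, leaves x₁,…,x_k and y₁,…,y_k respectively, together with a perfect matching x_i y_i) whose and-pointer number exceeds l. -/

import Mathlib

/-- Vertex set of the graph `G_k`: `(false, none)` is the star center `x`,
`(true, none)` is the center `y`, `(false, some i)` is the leaf `xᵢ` and
`(true, some i)` is the leaf `yᵢ`. -/
abbrev PV (k : ℕ) := Bool × Option (Fin k)

/-- Half of the adjacency of `G_k`: centers are adjacent to the leaves on
their side, and `xᵢ` is adjacent to `yᵢ` (a perfect matching). -/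
def Grel {k : ℕ} (a b : PV k) : Prop :=
  (a.2 = none ∧ a.1 = b.1 ∧ b.2 ≠ none) ∨
  (a.1 = false ∧ b.1 = true ∧ a.2 ≠ none ∧ a.2 = b.2)

/-- The (planar) graph `G_k`: two stars with centers `x`, `y` and leaves
`x₁,…,x_k` resp. `y₁,…,y_k`, together with the perfect matching `xᵢyᵢ`. -/
def Gk (k : ℕ) : SimpleGraph (PV k) where
  Adj a b := Grel a b ∨ Grel b a
  symm := ⟨fun a b h => h.symm⟩
  loopless := by
    refine ⟨?_⟩
    rintro a (h | h) <;> obtain ⟨h1, -, h3⟩ | ⟨h1, h2, -, -⟩ := h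
    · exact h3 h1
    · rw [h1] at h2; exact Bool.noConfusion h2
    · exact h3 h1
    · rw [h1] at h2; exact Bool.noConfusion h2

/-- The (not necessarily bijective) and-pointer number of `G` is at most `l`. -/
def APLe {V : Type} [Fintype V] (G : SimpleGraph V) (l : ℕ) : Prop :=
  ∃ (ι : V → Fin (Fintype.card V)) (ℓ : V → Fin l → Fin (Fintype.card V)),
    ∀ u v : V, u ≠ v →
      (G.Adj u v ↔ (∃ i, ℓ v i = ι u) ∧ (∃ i, ℓ u i = ι v))

/-- Planar graphs have unbounded and-pointer number: for every `l`, the planar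
graph `G_k` with `k = l² + 1` has and-pointer number exceeding `l`. -/
theorem stmt_7 : ∀ l : ℕ, ¬ APLe (Gk (l ^ 2 + 1)) l := by
  intro l hAP
  obtain ⟨ι, L, h⟩ := hAP
  -- adjacency facts
  have hxadj : ∀ i : Fin (l ^ 2 + 1), (Gk _).Adj (false, none) (false, some i) := fun i =>
    Or.inl (Or.inl ⟨rfl, rfl, by simp⟩)
  have hyadj : ∀ i : Fin (l ^ 2 + 1), (Gk _).Adj (true, none) (true, some i) := fun i =>
    Or.inl (Or.inl ⟨rfl, rfl, by simp⟩)
  have hmadj : ∀ i : Fin (l ^ 2 + 1), (Gk _).Adj (false, some i) (true, some i) := fun i =>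
    Or.inl (Or.inr ⟨rfl, rfl, by simp, rfl⟩)
  have hnadj : ∀ i j : Fin (l ^ 2 + 1), i ≠ j →
      ¬ (Gk _).Adj (false, some i) (true, some j) := by
    intro i j hij hadj
    rcases hadj with (⟨h1, -, -⟩ | ⟨-, -, -, h4⟩) | (⟨h1, -, -⟩ | ⟨h1, -, -, -⟩)
    · exact Option.some_ne_none _ h1
    · exact hij (by simpa using h4)
    · exact Option.some_ne_none _ h1
    · exact Bool.noConfusion h1
  -- pointers from centers
  have hx : ∀ i : Fin (l ^ 2 + 1), ∃ j, L (false, none) j = ι (false, some i) := fun i =>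
    ((h _ _ (by simp)).mp (hxadj i)).2
  have hy : ∀ i : Fin (l ^ 2 + 1), ∃ j, L (true, none) j = ι (true, some i) := fun i =>
    ((h _ _ (by simp)).mp (hyadj i)).2
  -- pigeonhole
  let F : Fin (l ^ 2 + 1) → Fin l × Fin l := fun i => ((hx i).choose, (hy i).choose)
  have hcard : Fintype.card (Fin l × Fin l) < Fintype.card (Fin (l ^ 2 + 1)) := by
    simp [sq]
  obtain ⟨i, i', hne, hFeq⟩ := Fintype.exists_ne_map_eq_of_card_lt F hcard
  have hxeq : ι (false, some i) = ι (false, some i') := by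
    rw [← (hx i).choose_spec, ← (hx i').choose_spec,
      show (hx i).choose = (hx i').choose from congrArg Prod.fst hFeq]
  have hyeq : ι (true, some i) = ι (true, some i') := by
    rw [← (hy i).choose_spec, ← (hy i').choose_spec,
      show (hy i).choose = (hy i').choose from congrArg Prod.snd hFeq]
  -- matching edges give pointers
  have hm1 := (h _ _ (by simp)).mp (hmadj i)
  have hm2 := (h _ _ (by simp)).mp (hmadj i')
  -- derive the false adjacency x_i ~ y_{i'}
  apply hnadj i i' hne
  refine (h (false, some i) (true, some i') (by simp)).mpr ⟨?_, ?_⟩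
  · obtain ⟨a, ha⟩ := hm2.1
    exact ⟨a, by rw [ha, ← hxeq]⟩
  · obtain ⟨b, hb⟩ := hm1.2
    exact ⟨b, by rw [hb, hyeq]⟩
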